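/- For every graph G, γ_g(G−e) ≥ ⌈(γ_g(G)+1)/2⌉ for any edge e of G. In particular, if γ_g(G) ≥ 2 then γ_g(G−e) ≥ 2, and if γ_g(G) ≥ 4 then γ_g(G−e) ≥ 3. -/
import Mathlib


open Classical

noncomputable section

namespace DomGame

variable {V : Type*} [Fintype V]

/-- Closed neighborhood of `v` as a `Finset`. -/
noncomputable def N (G : SimpleGraph V) (v : V) : Finset V :=
  Finset.univ.filter (fun u => G.Adj v u ∨ u = v)

/-- Legal moves given the set `S` of already dominated vertices. -/
noncomputable def moves (G : SimpleGraph V) (S : Finset V) : Finset V :=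
  Finset.univ.filter (fun v => ¬ N G v ⊆ S)

lemma card_lt {G : SimpleGraph V} {S : Finset V} (v : V) (hv : v ∈ moves G S) :
    (Finset.univ \ (S ∪ N G v)).card < (Finset.univ \ S).card := by
  simp only [moves, Finset.mem_filter] at hv
  obtain ⟨u, hu, hus⟩ := Finset.not_subset.mp hv.2
  apply Finset.card_lt_card
  refine ⟨Finset.sdiff_subset_sdiff (le_refl _) Finset.subset_union_left, ?_⟩
  intro hsub
  have := hsub (Finset.mem_sdiff.mpr ⟨Finset.mem_univ u, hus⟩)
  rw [Finset.mem_sdiff, Finset.mem_union] at this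
  exact this.2 (Or.inr hu)

mutual
/-- Number of moves with optimal play when it is Dominator's turn and
`S` is the set of already dominated vertices. -/
noncomputable def gameD (G : SimpleGraph V) (S : Finset V) : ℕ :=
  if h : (moves G S).Nonempty then
    1 + (moves G S).attach.inf' (by simpa using h)
      (fun v => gameS G (S ∪ N G v.1))
  else 0
termination_by (Finset.univ \ S).card
decreasing_by exact card_lt v.1 v.2

/-- Number of moves with optimal play when it is Staller's turn. -/
noncomputable def gameS (G : SimpleGraph V) (S : Finset V) : ℕ :=
  if h : (moves G S).Nonempty then
    1 + (moves G S).attach.sup' (by simpa using h)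
      (fun v => gameD G (S ∪ N G v.1))
  else 0
termination_by (Finset.univ \ S).card
decreasing_by exact card_lt v.1 v.2
end

/-- The (Dominator-start) game domination number. -/
noncomputable def gammaG (G : SimpleGraph V) : ℕ := gameD G ∅

/-- The Staller-start game domination number. -/
noncomputable def gammaG' (G : SimpleGraph V) : ℕ := gameS G ∅

lemma mem_N_self (G : SimpleGraph V) (v : V) : v ∈ N G v := by
  simp [N]

/-- `T` dominates every vertex outside `S`. -/
def covers (G : SimpleGraph V) (S T : Finset V) : Prop :=
  ∀ u, u ∉ S → ∃ v ∈ T, u ∈ N G v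

lemma covers_exists (G : SimpleGraph V) (S : Finset V) :
    ∃ k, ∃ T : Finset V, T.card ≤ k ∧ covers G S T :=
  ⟨(Finset.univ : Finset V).card, Finset.univ, le_rfl,
    fun u _ => ⟨u, Finset.mem_univ u, mem_N_self G u⟩⟩

/-- Minimum number of closed neighborhoods needed to finish dominating. -/
noncomputable def dom (G : SimpleGraph V) (S : Finset V) : ℕ :=
  Nat.find (covers_exists G S)

lemma dom_spec (G : SimpleGraph V) (S : Finset V) :
    ∃ T : Finset V, T.card ≤ dom G S ∧ covers G S T :=
  Nat.find_spec (covers_exists G S)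

lemma dom_le {G : SimpleGraph V} {S : Finset V} {k : ℕ}
    (h : ∃ T : Finset V, T.card ≤ k ∧ covers G S T) : dom G S ≤ k :=
  Nat.find_le h

lemma dom_mono_set {G : SimpleGraph V} {S S' : Finset V} (h : S ⊆ S') :
    dom G S' ≤ dom G S := by
  obtain ⟨T, hc, hcov⟩ := dom_spec G S
  exact dom_le ⟨T, hc, fun u hu => hcov u (fun hs => hu (h hs))⟩

lemma dom_pos {G : SimpleGraph V} {S : Finset V} (h : (moves G S).Nonempty) :
    1 ≤ dom G S := by
  obtain ⟨w, hw⟩ := h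
  simp only [moves, Finset.mem_filter] at hw
  obtain ⟨u, _, huS⟩ := Finset.not_subset.mp hw.2
  obtain ⟨T, hc, hcov⟩ := dom_spec G S
  obtain ⟨v, hvT, _⟩ := hcov u huS
  exact le_trans (Finset.card_pos.mpr ⟨v, hvT⟩) hc

lemma dom_eq_zero {G : SimpleGraph V} {S : Finset V}
    (h : ¬ (moves G S).Nonempty) : dom G S = 0 := by
  have h' : ∀ v, N G v ⊆ S := by
    intro v
    by_contra hc
    exact h ⟨v, Finset.mem_filter.mpr ⟨Finset.mem_univ v, hc⟩⟩
  have : dom G S ≤ 0 :=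
    dom_le ⟨∅, le_rfl, fun u hu => absurd (h' u (mem_N_self G u)) hu⟩
  omega

lemma dom_step {G : SimpleGraph V} (S : Finset V) (v : V) :
    dom G S ≤ 1 + dom G (S ∪ N G v) := by
  obtain ⟨T, hc, hcov⟩ := dom_spec G (S ∪ N G v)
  refine dom_le ⟨insert v T, ?_, ?_⟩
  · calc (insert v T).card ≤ T.card + 1 := Finset.card_insert_le v T
      _ ≤ 1 + dom G (S ∪ N G v) := by omega
  · intro u hu
    by_cases hN : u ∈ N G v
    · exact ⟨v, Finset.mem_insert_self v T, hN⟩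
    · obtain ⟨w, hwT, hw⟩ := hcov u (by
        simp only [Finset.mem_union]
        tauto)
      exact ⟨w, Finset.mem_insert_of_mem hwT, hw⟩

lemma game_empty {G : SimpleGraph V} {S : Finset V}
    (h : ¬ (moves G S).Nonempty) : gameD G S = 0 ∧ gameS G S = 0 := by
  rw [gameD, gameS]
  simp [h]

/-- The key inequalities relating the game values and `dom`. -/
lemma main_ineq (G : SimpleGraph V) :
    ∀ n (S : Finset V), (Finset.univ \ S).card ≤ n →
      gameD G S ≤ 2 * dom G S - 1 ∧ gameS G S ≤ 2 * dom G S ∧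
      dom G S ≤ gameD G S ∧ dom G S ≤ gameS G S := by
  intro n
  induction n with
  | zero =>
    intro S hS
    have hmov : ¬ (moves G S).Nonempty := by
      rintro ⟨v, hv⟩
      simp only [moves, Finset.mem_filter] at hv
      obtain ⟨u, _, hus⟩ := Finset.not_subset.mp hv.2
      have hmem : u ∈ Finset.univ \ S :=
        Finset.mem_sdiff.mpr ⟨Finset.mem_univ u, hus⟩
      have := Finset.card_pos.mpr ⟨u, hmem⟩
      omega
    obtain ⟨h1, h2⟩ := game_empty hmov
    have h3 := dom_eq_zero hmov
    omega
  | succ n ih =>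
    intro S hS
    by_cases hmov : (moves G S).Nonempty
    · have hd1 : 1 ≤ dom G S := dom_pos hmov
      have key : ∀ v, v ∈ moves G S →
          gameD G (S ∪ N G v) ≤ 2 * dom G (S ∪ N G v) - 1 ∧
          gameS G (S ∪ N G v) ≤ 2 * dom G (S ∪ N G v) ∧
          dom G (S ∪ N G v) ≤ gameD G (S ∪ N G v) ∧
          dom G (S ∪ N G v) ≤ gameS G (S ∪ N G v) := by
        intro v hv
        exact ih _ (by have := card_lt v hv; omega)
      have hDeq : gameD G S = 1 + (moves G S).attach.inf'
          (by simpa using hmov) (fun v => gameS G (S ∪ N G v.1)) := by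
        rw [gameD]; rw [dif_pos hmov]
      have hSeq : gameS G S = 1 + (moves G S).attach.sup'
          (by simpa using hmov) (fun v => gameD G (S ∪ N G v.1)) := by
        rw [gameS]; rw [dif_pos hmov]
      -- (1) gameD ≤ 2 dom - 1 : find a good move for Dominator
      have part1 : gameD G S ≤ 2 * dom G S - 1 := by
        obtain ⟨T, hcT, hcov⟩ := dom_spec G S
        obtain ⟨w, hw⟩ := id hmov
        have hw' : ¬ N G w ⊆ S := (Finset.mem_filter.mp hw).2
        obtain ⟨u, _, huS⟩ := Finset.not_subset.mp hw'
        obtain ⟨v, hvT, huv⟩ := hcov u huS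
        have hvm : v ∈ moves G S := Finset.mem_filter.mpr
          ⟨Finset.mem_univ v, fun hsub => huS (hsub huv)⟩
        have hdrop : dom G (S ∪ N G v) ≤ dom G S - 1 := by
          refine dom_le ⟨T.erase v, ?_, ?_⟩
          · rw [Finset.card_erase_of_mem hvT]; omega
          · intro u' hu'
            have hu'S : u' ∉ S := fun h =>
              hu' (Finset.mem_union.mpr (Or.inl h))
            have hu'N : u' ∉ N G v := fun h =>
              hu' (Finset.mem_union.mpr (Or.inr h))
            obtain ⟨w', hw'T, hw'N⟩ := hcov u' hu'S
            refine ⟨w', Finset.mem_erase.mpr ⟨?_, hw'T⟩, hw'N⟩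
            rintro rfl; exact hu'N hw'N
        have hle : gameD G S ≤ 1 + gameS G (S ∪ N G v) := by
          rw [hDeq]
          have hinf : (moves G S).attach.inf' (by simpa using hmov)
              (fun p : {x // x ∈ moves G S} => gameS G (S ∪ N G p.1)) ≤
              gameS G (S ∪ N G v) :=
            Finset.inf'_le _ (Finset.mem_attach _ ⟨v, hvm⟩)
          omega
        have := (key v hvm).2.1
        omega
      -- (2) gameS ≤ 2 dom
      have part2 : gameS G S ≤ 2 * dom G S := by
        rw [hSeq]
        have hsup : (moves G S).attach.sup' (by simpa using hmov)
            (fun v => gameD G (S ∪ N G v.1)) ≤ 2 * dom G S - 1 := by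
          apply Finset.sup'_le
          rintro ⟨v, hv⟩ _
          show gameD G (S ∪ N G v) ≤ 2 * dom G S - 1
          have h1 := (key v hv).1
          have h2 : dom G (S ∪ N G v) ≤ dom G S :=
            dom_mono_set Finset.subset_union_left
          omega
        omega
      -- (3) dom ≤ gameD
      have part3 : dom G S ≤ gameD G S := by
        obtain ⟨p, _, hpeq⟩ := Finset.exists_mem_eq_inf'
          (by simpa using hmov : ((moves G S).attach).Nonempty)
          (fun v => gameS G (S ∪ N G v.1))
        have h1 := dom_step (G := G) S p.1
        have h2 := (key p.1 p.2).2.2.2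
        have hpeq' : (moves G S).attach.inf' (by simpa using hmov)
            (fun v => gameS G (S ∪ N G v.1)) = gameS G (S ∪ N G p.1) := hpeq
        rw [hDeq, hpeq']
        omega
      -- (4) dom ≤ gameS
      have part4 : dom G S ≤ gameS G S := by
        obtain ⟨w, hw⟩ := id hmov
        have h1 := dom_step (G := G) S w
        have h2 := (key w hw).2.2.1
        have hle : gameD G (S ∪ N G w) ≤ (moves G S).attach.sup'
            (by simpa using hmov) (fun v => gameD G (S ∪ N G v.1)) :=
          Finset.le_sup' (fun p : {x // x ∈ moves G S} =>
            gameD G (S ∪ N G p.1)) (Finset.mem_attach _ ⟨w, hw⟩)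
        rw [hSeq]
        omega
      exact ⟨part1, part2, part3, part4⟩
    · obtain ⟨h1, h2⟩ := game_empty hmov
      have h3 := dom_eq_zero hmov
      omega

lemma dom_mono_graph {G G' : SimpleGraph V}
    (h : ∀ v u, G'.Adj v u → G.Adj v u) (S : Finset V) :
    dom G S ≤ dom G' S := by
  obtain ⟨T, hc, hcov⟩ := dom_spec G' S
  refine dom_le ⟨T, hc, fun u hu => ?_⟩
  obtain ⟨v, hvT, hvN⟩ := hcov u hu
  refine ⟨v, hvT, ?_⟩
  simp only [N, Finset.mem_filter, Finset.mem_univ, true_and] at hvN ⊢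
  rcases hvN with h' | h'
  · exact Or.inl (h v u h')
  · exact Or.inr h'

end DomGame

open DomGame in
/-- `γ_g(G−e) ≥ ⌈(γ_g(G)+1)/2⌉`; in particular `γ_g(G) ≥ 2` implies
`γ_g(G−e) ≥ 2`, and `γ_g(G) ≥ 4` implies `γ_g(G−e) ≥ 3`. -/
theorem gameD_edge_removal_lower {V : Type*} [Fintype V] (G : SimpleGraph V)
    (e : Sym2 V) (he : e ∈ G.edgeSet) :
    (gammaG G + 2) / 2 ≤ gammaG (G.deleteEdges {e}) ∧
    (2 ≤ gammaG G → 2 ≤ gammaG (G.deleteEdges {e})) ∧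
    (4 ≤ gammaG G → 3 ≤ gammaG (G.deleteEdges {e})) := by
  set G' := G.deleteEdges {e} with hG'
  -- V is nonempty, hence the starting position has moves available
  have hne : Nonempty V := by
    induction e using Sym2.ind with
    | _ a b => exact ⟨a⟩
  obtain ⟨a⟩ := hne
  have hmovG : (moves G (∅ : Finset V)).Nonempty := by
    refine ⟨a, Finset.mem_filter.mpr ⟨Finset.mem_univ a, fun hsub => ?_⟩⟩
    simpa using hsub (mem_N_self G a)
  have hmovG' : (moves G' (∅ : Finset V)).Nonempty := by
    refine ⟨a, Finset.mem_filter.mpr ⟨Finset.mem_univ a, fun hsub => ?_⟩⟩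
    simpa using hsub (mem_N_self G' a)
  have h1 : gameD G ∅ ≤ 2 * dom G ∅ - 1 := (main_ineq G _ ∅ le_rfl).1
  have h2 : dom G ∅ ≤ dom G' ∅ :=
    dom_mono_graph (fun v u hadj => (SimpleGraph.deleteEdges_adj.mp hadj).1) ∅
  have h3 : dom G' ∅ ≤ gameD G' ∅ := (main_ineq G' _ ∅ le_rfl).2.2.1
  have h4 : 1 ≤ dom G ∅ := dom_pos hmovG
  have hγ : gammaG G = gameD G ∅ := rfl
  have hγ' : gammaG G' = gameD G' ∅ := rfl
  rw [hγ, hγ']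
  omega
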